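/- Let A ∈ ℝ^{m×n} preserve Chebyshev systems. Define the sign dependency graph G^{sd}_A on vertices {1,…,n} with an edge from k to l iff k = 𝔧(𝔦(l)), where 𝔦(j) is the row index of the maximum-absolute-value entry of column j and 𝔧(i) the column index of the maximum-absolute-value entry of row i. Then each vertex has exactly one incoming edge, the graph contains at least one loop (vertex j with 𝔧(𝔦(j)) = j), and every directed cycle is a loop. -/
import Mathlib


open Filter

/-- A vector is Chebyshev if all of its components are non-zero. -/
def Cheb {n : ℕ} (v : Fin n → ℝ) : Prop := ∀ i, v i ≠ 0

/-- `mu a v` is the (unique, when `v` is Chebyshev) minimizer of `u ↦ ‖a - u • v‖`,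
where `‖·‖` is the sup-norm on `Fin n → ℝ`. -/
noncomputable def mu {n : ℕ} (a v : Fin n → ℝ) : ℝ :=
  Classical.epsilon fun t : ℝ => ∀ u : ℝ, ‖a - t • v‖ ≤ ‖a - u • v‖

noncomputable def phi {m n : ℕ} (A : Fin m → Fin n → ℝ) (v : Fin n → ℝ) : Fin m → ℝ :=
  fun i => mu (A i) v

noncomputable def psi {m n : ℕ} (A : Fin m → Fin n → ℝ) (u : Fin m → ℝ) : Fin n → ℝ :=
  fun j => mu (fun i => A i j) u

/-- `A` preserves Chebyshev systems. -/
def PreservesCheb {m n : ℕ} (A : Fin m → Fin n → ℝ) : Prop :=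
  (∀ v : Fin n → ℝ, Cheb v → Cheb (phi A v)) ∧ (∀ u : Fin m → ℝ, Cheb u → Cheb (psi A u))

/-- A vector is alternance-free if exactly one component attains the max absolute value. -/
def AlternanceFree {n : ℕ} (a : Fin n → ℝ) : Prop := ∃! i, |a i| = ‖a‖

/-- Chebyshev norm of the residual `A - u vᵀ`. -/
noncomputable def Cerr {m n : ℕ} (A : Fin m → Fin n → ℝ) (u : Fin m → ℝ) (v : Fin n → ℝ) : ℝ :=
  ⨆ i, ⨆ j, |A i j - u i * v j|

/-- Chebyshev norm of a matrix. -/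
noncomputable def CnormM {m n : ℕ} (A : Fin m → Fin n → ℝ) : ℝ :=
  ⨆ i, ⨆ j, |A i j|

/-- The sequence `v⁽ᵏ⁾` of the alternating minimization method started at `v0`. -/
noncomputable def vseq {m n : ℕ} (A : Fin m → Fin n → ℝ) (v0 : Fin n → ℝ) : ℕ → Fin n → ℝ
  | 0 => v0
  | k + 1 => psi A (phi A (vseq A v0 k))

theorem stmt12 {m n : ℕ} (hm : 2 ≤ m) (hn : 2 ≤ n) (A : Fin m → Fin n → ℝ)
    (I : Fin n → Fin m) (J : Fin m → Fin n)
    (hI : ∀ j i, i ≠ I j → |A i j| < |A (I j) j|)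
    (hJ : ∀ i j, j ≠ J i → |A i j| < |A i (J i)|) :
    (∀ l : Fin n, ∃! k : Fin n, k = J (I l)) ∧
    (∃ j : Fin n, J (I j) = j) ∧
    (∀ p : ℕ, ∀ c : ℕ → Fin n, 1 ≤ p → (∀ k < p, c k = J (I (c (k + 1)))) → c p = c 0 →
      ∀ k ≤ p, c k = c 0) := by
  classical
  set g : Fin n → ℝ := fun j => |A (I j) j| with hg
  have step : ∀ j, J (I j) = j ∨ g j < g (J (I j)) := by
    intro j
    by_cases h : J (I j) = j
    · exact Or.inl h
    · right
      have h1 : g j < |A (I j) (J (I j))| := hJ (I j) j (fun e => h e.symm)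
      have h2 : |A (I j) (J (I j))| ≤ g (J (I j)) := by
        by_cases h' : I j = I (J (I j))
        · simp only [hg]; rw [← h']
        · exact (hI (J (I j)) (I j) h').le
      exact lt_of_lt_of_le h1 h2
  have le_step : ∀ j, g j ≤ g (J (I j)) := by
    intro j; rcases step j with h | h
    · rw [h]
    · exact h.le
  haveI : Nonempty (Fin n) := ⟨⟨0, by omega⟩⟩
  refine ⟨fun l => ⟨J (I l), rfl, fun k hk => hk⟩, ?_, ?_⟩
  · obtain ⟨j0, hj0⟩ := Finite.exists_max g
    rcases step j0 with h | h
    · exact ⟨j0, h⟩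
    · exact absurd (hj0 (J (I j0))) (not_le.mpr h)
  · intro p c hp hc hcp
    have dec1 : ∀ k < p, g (c (k + 1)) ≤ g (c k) := by
      intro k hk; rw [hc k hk]; exact le_step (c (k + 1))
    have dec : ∀ b ≤ p, ∀ a ≤ b, g (c b) ≤ g (c a) := by
      intro b hb
      induction b with
      | zero => intro a ha; rw [Nat.le_zero.mp ha]
      | succ b ih =>
        intro a ha
        rcases Nat.eq_or_lt_of_le ha with h | h
        · rw [h]
        · exact le_trans (dec1 b (by omega)) (ih (by omega) a (by omega))
    have geq : ∀ k ≤ p, g (c k) = g (c 0) := by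
      intro k hk
      refine le_antisymm (dec k hk 0 (by omega)) ?_
      have := dec p le_rfl k hk
      rwa [hcp] at this
    have fix : ∀ k < p, c k = c (k + 1) := by
      intro k hk
      rcases step (c (k + 1)) with h | h
      · rw [hc k hk, h]
      · exfalso
        rw [← hc k hk] at h
        rw [geq k hk.le, geq (k + 1) hk] at h
        exact lt_irrefl _ h
    intro k
    induction k with
    | zero => intro _; rfl
    | succ k ih =>
      intro hk
      rw [← fix k (by omega), ih (by omega)]
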